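/- The theta function θ₀₁(0,τ) = ∑_{n∈ℤ} exp(πin²τ + πin) (i.e. ∑_{n∈ℤ} (−1)ⁿ exp(πin²τ)) satisfies the product formula θ₀₁(0,τ) = ∏_{m=1}^∞ (1 − exp(2πimτ)) · ∏_{m=0}^∞ (1 − exp(πi(2m+1)τ))² for all τ in the upper half plane. -/

import Mathlib

open Complex Finset Filter Topology

noncomputable def Complex.abs : AbsoluteValue ℂ ℝ :=
  IsAbsoluteValue.toAbsoluteValue (norm : ℂ → ℝ)

lemma Complex.norm_eq_abs (z : ℂ) : ‖z‖ = Complex.abs z := rfl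

lemma Complex.continuous_abs : Continuous Complex.abs := continuous_norm

lemma Complex.abs_exp (z : ℂ) : Complex.abs (Complex.exp z) = Real.exp z.re := Complex.norm_exp z

namespace Theta01JTP

noncomputable def Pp (x : ℂ) (n : ℕ) : ℂ := ∏ j ∈ Finset.range n, (1 - x ^ (j+1))

@[simp] lemma Pp_zero (x : ℂ) : Pp x 0 = 1 := by simp [Pp]

lemma Pp_succ (x : ℂ) (n : ℕ) : Pp x (n+1) = Pp x n * (1 - x ^ (n+1)) := by
  simp [Pp, Finset.prod_range_succ]

noncomputable def qb (x : ℂ) : ℕ → ℕ → ℂ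
  | _, 0 => 1
  | 0, _+1 => 0
  | n+1, k+1 => qb x n (k+1) + x^(n-k) * qb x n k

@[simp] lemma qb_zero_right (x : ℂ) (n : ℕ) : qb x n 0 = 1 := by cases n <;> rfl

lemma qb_of_lt (x : ℂ) : ∀ {n k : ℕ}, n < k → qb x n k = 0 := by
  intro n
  induction n with
  | zero => intro k hk; obtain ⟨k, rfl⟩ : ∃ j, k = j + 1 := ⟨k - 1, by omega⟩; rfl
  | succ n ih =>
    intro k hk
    obtain ⟨k, rfl⟩ : ∃ j, k = j + 1 := ⟨k - 1, by omega⟩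
    show qb x n (k+1) + x^(n-k) * qb x n k = 0
    rw [ih (by omega), ih (by omega)]; ring

lemma qb_diag (x : ℂ) : ∀ n : ℕ, qb x n n = 1 := by
  intro n
  induction n with
  | zero => rfl
  | succ n ih =>
    show qb x n (n+1) + x^(n-n) * qb x n n = 1
    rw [qb_of_lt x (by omega), ih]; simp

lemma qb_mul_Pp (x : ℂ) : ∀ n k : ℕ, k ≤ n → qb x n k * Pp x k * Pp x (n-k) = Pp x n := by
  intro n
  induction n with
  | zero => intro k hk; interval_cases k; simp
  | succ n ih =>
    intro k hk
    rcases Nat.eq_zero_or_pos k with rfl | hk0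
    · simp
    obtain ⟨k, rfl⟩ : ∃ j, k = j + 1 := ⟨k - 1, by omega⟩
    rcases eq_or_lt_of_le hk with heq | hlt
    · rw [← heq, qb_diag, Nat.sub_self]; simp
    · have hkn : k + 1 ≤ n := by omega
      obtain ⟨d, rfl⟩ : ∃ d, n = k + 1 + d := ⟨n - (k+1), by omega⟩
      have ih1 := ih (k+1) hkn
      have ih2 := ih k (by omega)
      show (qb x (k+1+d) (k+1) + x^(k+1+d-k) * qb x (k+1+d) k) * Pp x (k+1) * Pp x (k+1+d+1-(k+1)) = _
      have e1 : k+1+d-k = d+1 := by omega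
      have e2 : k+1+d+1-(k+1) = d+1 := by omega
      have e3 : k+1+d-(k+1) = d := by omega
      have e4 : k+1+d-k = d+1 := by omega
      rw [e1, e2]
      rw [e3] at ih1
      rw [e4] at ih2
      rw [Pp_succ x (k+1+d), Pp_succ x d, Pp_succ x k] at *
      have hpow : x ^ (d+1) * x ^ (k+1) = x ^ (k+1+d+1) := by rw [← pow_add]; ring_nf
      linear_combination (1 - x^(d+1)) * ih1 + (x^(d+1) * (1 - x^(k+1))) * ih2 +
        (qb x (k+1+d) k * Pp x k * Pp x d - Pp x (k+1+d)) * hpow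


section Bounds
variable {x : ℂ} (hx : Complex.abs x < 1)
include hx

lemma one_sub_pow_ne (j : ℕ) : 1 - x ^ (j+1) ≠ 0 := by
  intro h
  have h2 : x ^ (j+1) = 1 := by linear_combination -h
  have : Complex.abs (x ^ (j+1)) < 1 := by
    rw [map_pow]
    exact pow_lt_one₀ (Complex.abs.nonneg x) hx (Nat.succ_ne_zero j)
  rw [h2] at this; simp at this

lemma Pp_ne_zero (n : ℕ) : Pp x n ≠ 0 :=
  Finset.prod_ne_zero_iff.mpr fun j _ => one_sub_pow_ne hx j

lemma sum_pow_le (n : ℕ) : ∑ j ∈ Finset.range n, (Complex.abs x) ^ (j+1) ≤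
    Complex.abs x / (1 - Complex.abs x) := by
  set r := Complex.abs x
  have hr0 : 0 ≤ r := Complex.abs.nonneg x
  calc ∑ j ∈ Finset.range n, r ^ (j+1) = r * ∑ j ∈ Finset.range n, r ^ j := by
        rw [Finset.mul_sum]; exact Finset.sum_congr rfl fun j _ => by ring
    _ ≤ r * (1 - r)⁻¹ := by
        refine mul_le_mul_of_nonneg_left ?_ hr0
        have := Summable.sum_le_tsum (Finset.range n) (fun i _ => pow_nonneg hr0 i)
          (summable_geometric_of_lt_one hr0 hx)
        rwa [tsum_geometric_of_lt_one hr0 hx] at this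
    _ = r / (1 - r) := by rw [div_eq_mul_inv]

lemma Pp_abs_le (n : ℕ) :
    Complex.abs (Pp x n) ≤ Real.exp (Complex.abs x / (1 - Complex.abs x)) := by
  set r := Complex.abs x with hr
  have hr0 : 0 ≤ r := Complex.abs.nonneg x
  rw [Pp, map_prod]
  calc ∏ j ∈ Finset.range n, Complex.abs (1 - x ^ (j+1))
      ≤ ∏ j ∈ Finset.range n, Real.exp (r ^ (j+1)) := by
        refine Finset.prod_le_prod (fun j _ => Complex.abs.nonneg _) (fun j _ => ?_)
        calc Complex.abs (1 - x ^ (j+1)) ≤ Complex.abs 1 + Complex.abs (x ^ (j+1)) := by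
              simpa [sub_eq_add_neg] using Complex.abs.add_le 1 (-(x ^ (j+1)))
          _ = 1 + r ^ (j+1) := by rw [map_pow]; simp [hr]
          _ ≤ Real.exp (r ^ (j+1)) := by
              simpa [add_comm] using Real.add_one_le_exp (r ^ (j+1))
    _ = Real.exp (∑ j ∈ Finset.range n, r ^ (j+1)) := by rw [Real.exp_sum]
    _ ≤ _ := Real.exp_le_exp.mpr (sum_pow_le hx n)

lemma le_Pp_abs (n : ℕ) :
    Real.exp (-(Complex.abs x / (1 - Complex.abs x)^2)) ≤ Complex.abs (Pp x n) := by
  set r := Complex.abs x with hr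
  have hr0 : 0 ≤ r := Complex.abs.nonneg x
  have hr1 : 0 < 1 - r := by linarith
  rw [Pp, map_prod]
  have key : ∀ j : ℕ, Real.exp (-(r ^ (j+1) / (1 - r))) ≤ Complex.abs (1 - x ^ (j+1)) := by
    intro j
    set y := r ^ (j+1) with hy
    have hy0 : 0 ≤ y := pow_nonneg hr0 _
    have hyr : y ≤ r := by
      calc y ≤ r ^ 1 := pow_le_pow_of_le_one hr0 hx.le (by omega)
        _ = r := pow_one r
    have h1 : 1 - y ≤ Complex.abs (1 - x ^ (j+1)) := by
      have habs : Complex.abs ((1 - x ^ (j+1)) + x ^ (j+1)) ≤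
          Complex.abs (1 - x ^ (j+1)) + Complex.abs (x ^ (j+1)) :=
        Complex.abs.add_le _ _
      simp only [sub_add_cancel, map_one, map_pow] at habs
      rw [hy]; linarith
    have h2 : Real.exp (-(y / (1 - r))) ≤ 1 - y := by
      set t := y / (1 - r) with ht
      have ht0 : 0 ≤ t := by positivity
      have hexp : 1 + t ≤ Real.exp t := by
        simpa [add_comm] using Real.add_one_le_exp t
      have hmul : 1 ≤ (1 - y) * (1 + t) := by
        have : (1 - y) * (1 + t) - 1 = y * (r - y) / (1 - r) := by
          rw [ht]; field_simp; ring
        have hpos : 0 ≤ y * (r - y) / (1 - r) := by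
          have := mul_nonneg hy0 (sub_nonneg.mpr hyr)
          positivity
        linarith
      have hmul2 : 1 ≤ (1 - y) * Real.exp t := by
        calc (1:ℝ) ≤ (1 - y) * (1 + t) := hmul
          _ ≤ (1 - y) * Real.exp t := by
            refine mul_le_mul_of_nonneg_left hexp ?_
            nlinarith
      have hprod : Real.exp (-t) * Real.exp t = 1 := by
        rw [← Real.exp_add]; simp
      nlinarith [Real.exp_pos t]
    linarith
  calc Real.exp (-(r / (1-r)^2))
      ≤ Real.exp (-((∑ j ∈ Finset.range n, r ^ (j+1)) / (1 - r))) := by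
        refine Real.exp_le_exp.mpr ?_
        have := sum_pow_le hx n
        rw [neg_le_neg_iff, div_le_div_iff₀ hr1 (by positivity)]
        have h' : (∑ j ∈ Finset.range n, r ^ (j+1)) * (1 - r) ≤ r := (le_div_iff₀ hr1).mp this
        nlinarith [mul_le_mul_of_nonneg_right h' hr1.le]
    _ = ∏ j ∈ Finset.range n, Real.exp (-(r ^ (j+1) / (1-r))) := by
        rw [← Real.exp_sum]
        rw [Finset.sum_div] at *
        rw [← Finset.sum_neg_distrib]
    _ ≤ _ := Finset.prod_le_prod (fun j _ => (Real.exp_pos _).le) (fun j _ => key j)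

end Bounds

section Bounds2
variable {x : ℂ} (hx : Complex.abs x < 1)

noncomputable def Cbd (x : ℂ) : ℝ :=
  Real.exp (Complex.abs x / (1 - Complex.abs x)) *
    (Real.exp (-(Complex.abs x / (1 - Complex.abs x)^2)))⁻¹ ^ 2

include hx

omit hx in
lemma Cbd_pos : 0 < Cbd x := by
  unfold Cbd; positivity

lemma qb_abs_le (n k : ℕ) : Complex.abs (qb x n k) ≤ Cbd x := by
  rcases le_or_gt k n with hk | hk
  · have h := qb_mul_Pp x n k hk
    have hnk1 := Pp_ne_zero hx k
    have hnk2 := Pp_ne_zero hx (n-k)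
    have h2 : qb x n k = Pp x n * (Pp x k)⁻¹ * (Pp x (n-k))⁻¹ := by
      rw [← h]; field_simp
    rw [h2, map_mul, map_mul, map_inv₀, map_inv₀]
    unfold Cbd
    have hL := le_Pp_abs hx
    have hA := Pp_abs_le hx n
    set L := Real.exp (-(Complex.abs x / (1 - Complex.abs x)^2)) with hLdef
    have hLpos : 0 < L := Real.exp_pos _
    have hinv : ∀ m : ℕ, (Complex.abs (Pp x m))⁻¹ ≤ L⁻¹ := fun m =>
      inv_anti₀ hLpos (hL m)
    calc Complex.abs (Pp x n) * (Complex.abs (Pp x k))⁻¹ * (Complex.abs (Pp x (n-k)))⁻¹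
        ≤ Real.exp (Complex.abs x / (1 - Complex.abs x)) * L⁻¹ * L⁻¹ := by
          exact mul_le_mul (mul_le_mul hA (hinv k) (by positivity) (by positivity))
            (hinv (n-k)) (by positivity) (by positivity)
      _ = Real.exp (Complex.abs x / (1 - Complex.abs x)) * L⁻¹ ^ 2 := by ring
  · rw [qb_of_lt x hk]
    simp only [map_zero]
    exact Cbd_pos.le

end Bounds2

section HasProdSec

lemma hasProd_one_sub {u : ℕ → ℂ} (hu : Summable u) (hne : ∀ j, 1 - u j ≠ 0) :
    HasProd (fun j => 1 - u j) (∏' j : ℕ, (1 - u j)) := by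
  have hlog : Summable (fun j => Complex.log (1 - u j)) := by
    refine Summable.of_norm_bounded_eventually_nat (g := fun j => 3/2 * ‖u j‖)
      (hu.norm.mul_left _) ?_
    have hev : ∀ᶠ j in atTop, ‖u j‖ ≤ 1/2 := by
      have := hu.tendsto_atTop_zero.norm
      simp only [norm_zero] at this
      exact this.eventually_le_const (by norm_num)
    filter_upwards [hev] with j hj
    have : (1 : ℂ) - u j = 1 + (-(u j)) := by ring
    rw [this]
    have := Complex.norm_log_one_add_half_le_self (z := -(u j)) (by simpa using hj)
    simpa using this
  have hmul : Multipliable (fun j : ℕ => 1 - u j) :=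
    Complex.multipliable_of_summable_log hlog
  exact hmul.hasProd

end HasProdSec

noncomputable def qbZ (x : ℂ) (n : ℕ) (j : ℤ) : ℂ := if 0 ≤ j then qb x n j.toNat else 0

noncomputable def gi (x : ℂ) (j : ℤ) : ℂ := if 0 ≤ j then (Pp x j.toNat)⁻¹ else 0

noncomputable def cf (q : ℂ) (m : ℤ) : ℂ := (-1)^m * q^(m^2)

lemma qbZ_natCast (x : ℂ) (n k : ℕ) : qbZ x n (k : ℤ) = qb x n k := by
  simp [qbZ]

lemma qbZ_eq_zero (x : ℂ) (n : ℕ) (j : ℤ) (h : j < 0 ∨ (n:ℤ) < j) : qbZ x n j = 0 := by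
  rcases h with h | h
  · simp [qbZ, not_le.mpr h]
  · have h0 : (0:ℤ) ≤ j ∨ j < 0 := by omega
    rcases h0 with h0 | h0
    · rw [qbZ, if_pos h0]
      exact qb_of_lt x (by omega)
    · simp [qbZ, not_le.mpr h0]

section Ctx
variable {x : ℂ} (hx : Complex.abs x < 1)
include hx

lemma gi_ne_zero (j : ℤ) (h : 0 ≤ j) : gi x j ≠ 0 := by
  rw [gi, if_pos h]
  exact inv_ne_zero (Pp_ne_zero hx _)

lemma gi_rec (j : ℤ) (h : -1 ≤ j) : gi x j = gi x (j+1) * (1 - x^((j+1).toNat)) := by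
  rcases eq_or_lt_of_le h with rfl | h'
  · norm_num [gi]
  · have h0 : 0 ≤ j := by omega
    rw [gi, gi, if_pos h0, if_pos (by omega : (0:ℤ) ≤ j + 1)]
    have ht : (j+1).toNat = j.toNat + 1 := by omega
    rw [ht, Pp_succ, mul_inv]
    rw [inv_mul_cancel_right₀ (one_sub_pow_ne hx _)]

lemma qbZ_eq (n : ℕ) (j : ℤ) : qbZ x n j = Pp x n * gi x j * gi x ((n:ℤ) - j) := by
  rcases lt_or_ge j 0 with h | h
  · rw [qbZ_eq_zero x n j (Or.inl h), gi, if_neg (not_le.mpr h)]; ring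
  rcases lt_or_ge (n:ℤ) j with h2 | h2
  · rw [qbZ_eq_zero x n j (Or.inr h2)]
    have hg : gi x ((n:ℤ) - j) = 0 := by rw [gi, if_neg (by omega)]
    rw [hg]; ring
  · rw [qbZ, if_pos h, gi, gi, if_pos (by omega), if_pos (by omega)]
    have hk : j.toNat ≤ n := by omega
    have hsub : ((n:ℤ) - j).toNat = n - j.toNat := by omega
    rw [hsub]
    have h := qb_mul_Pp x n j.toNat hk
    have h1 := Pp_ne_zero hx j.toNat
    have h2 := Pp_ne_zero hx (n - j.toNat)
    field_simp
    linear_combination h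

end Ctx

section CF
variable {q : ℂ} (hq0 : q ≠ 0)
include hq0

omit hq0 in
lemma neg_one_zpow_sub_one (m : ℤ) : ((-1:ℂ))^(m-1) = -((-1:ℂ))^m := by
  rw [zpow_sub₀ (by norm_num : (-1:ℂ) ≠ 0), zpow_one]
  field_simp

omit hq0 in
lemma neg_one_zpow_add_one (m : ℤ) : ((-1:ℂ))^(m+1) = -((-1:ℂ))^m := by
  rw [zpow_add₀ (by norm_num : (-1:ℂ) ≠ 0), zpow_one]
  ring

omit hq0 in
lemma cf_zero : cf q 0 = 1 := by simp [cf]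

lemma zpow_combine (c d : ℕ) (e f : ℤ) (h : (c:ℤ) + e = (d:ℤ) + f) :
    q^c * q^e = q^d * q^f := by
  rw [← zpow_natCast q c, ← zpow_natCast q d, ← zpow_add₀ hq0, ← zpow_add₀ hq0, h]

lemma cf_mul_sub_one (N a b : ℕ) (m : ℤ) (hm : m = (a:ℤ) - N) (hab : a + b = 2*N) :
    q^(2*N+1) * cf q (m-1) = -(cf q m * (q^2)^(b+1)) := by
  rw [cf, cf, neg_one_zpow_sub_one, ← pow_mul]
  have hab' : (a:ℤ) + b = 2*N := by exact_mod_cast hab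
  have h := zpow_combine hq0 (2*N+1) (2*(b+1)) ((m-1)^2) (m^2)
    (by subst hm; push_cast; ring_nf; omega)
  linear_combination (-(-1:ℂ)^m) * h

lemma cf_mul_add_one (N a b : ℕ) (m : ℤ) (hm : m = (a:ℤ) - N) (hab : a + b = 2*N) :
    q^(2*N+1) * cf q (m+1) = -(cf q m * (q^2)^(a+1)) := by
  rw [cf, cf, neg_one_zpow_add_one, ← pow_mul]
  have hab' : (a:ℤ) + b = 2*N := by exact_mod_cast hab
  have h := zpow_combine hq0 (2*N+1) (2*(a+1)) ((m+1)^2) (m^2)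
    (by subst hm; push_cast; ring_nf)
  linear_combination (-(-1:ℂ)^m) * h

end CF

lemma dagger {q : ℂ} (hq0 : q ≠ 0) (habs : Complex.abs (q^2) < 1) (N : ℕ) (m : ℤ) :
    cf q m * qbZ (q^2) (2*N+2) ((N:ℤ)+1+m) =
      (1 + (q^2)^(2*N+1)) * (cf q m * qbZ (q^2) (2*N) ((N:ℤ)+m))
      - q^(2*N+1) * (cf q (m-1) * qbZ (q^2) (2*N) ((N:ℤ)+m-1)
                   + cf q (m+1) * qbZ (q^2) (2*N) ((N:ℤ)+m+1)) := by
  set x := q^2 with hxdef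
  by_cases hc1 : ((N:ℤ)+2 ≤ m ∨ m ≤ -((N:ℤ)+2))
  · rcases hc1 with h | h <;>
    · rw [qbZ_eq_zero x (2*N+2) ((N:ℤ)+1+m) (by push_cast; omega),
          qbZ_eq_zero x (2*N) ((N:ℤ)+m) (by push_cast; omega),
          qbZ_eq_zero x (2*N) ((N:ℤ)+m-1) (by push_cast; omega),
          qbZ_eq_zero x (2*N) ((N:ℤ)+m+1) (by push_cast; omega)]
      ring
  by_cases hc2 : m = (N:ℤ)+1
  · subst hc2
    rw [qbZ_eq_zero x (2*N) ((N:ℤ)+((N:ℤ)+1)) (by right; push_cast; omega),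
        qbZ_eq_zero x (2*N) ((N:ℤ)+((N:ℤ)+1)+1) (by right; push_cast; omega),
        show (N:ℤ)+1+((N:ℤ)+1) = ((2*N+2 : ℕ):ℤ) from by push_cast; ring,
        show (N:ℤ)+((N:ℤ)+1)-1 = ((2*N : ℕ):ℤ) from by push_cast; ring,
        qbZ_natCast, qbZ_natCast, qb_diag, qb_diag,
        show (N:ℤ)+1-1 = (N:ℤ) from by ring]
    have c2 := cf_mul_add_one hq0 N (2*N) 0 (N:ℤ) (by push_cast; ring) (by omega)
    apply mul_left_cancel₀ (pow_ne_zero (2*N+1) hq0)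
    rw [← hxdef] at c2
    linear_combination c2
  by_cases hc3 : m = -((N:ℤ)+1)
  · subst hc3
    rw [qbZ_eq_zero x (2*N) ((N:ℤ)+(-((N:ℤ)+1))) (by left; omega),
        qbZ_eq_zero x (2*N) ((N:ℤ)+(-((N:ℤ)+1))-1) (by left; omega),
        show (N:ℤ)+1+(-((N:ℤ)+1)) = ((0 : ℕ):ℤ) from by push_cast; ring,
        show (N:ℤ)+(-((N:ℤ)+1))+1 = ((0 : ℕ):ℤ) from by push_cast; ring,
        qbZ_natCast, qbZ_natCast, qb_zero_right, qb_zero_right,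
        show -((N:ℤ)+1)+1 = -(N:ℤ) from by ring,
        show -((N:ℤ)+1) = -(N:ℤ)-1 from by ring]
    have c1 := cf_mul_sub_one hq0 N 0 (2*N) (-(N:ℤ)) (by push_cast; ring) (by omega)
    apply mul_left_cancel₀ (pow_ne_zero (2*N+1) hq0)
    rw [← hxdef] at c1
    linear_combination c1
  -- generic case : -(N+1) < m < N+1, i.e. |m| ≤ N
  have hmN : -(N:ℤ) ≤ m ∧ m ≤ (N:ℤ) := by omega
  obtain ⟨a, ha⟩ : ∃ a:ℕ, (N:ℤ)+m = a := ⟨((N:ℤ)+m).toNat, by omega⟩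
  obtain ⟨b, hb⟩ : ∃ b:ℕ, (N:ℤ)-m = b := ⟨((N:ℤ)-m).toNat, by omega⟩
  have hab : a + b = 2*N := by omega
  have hm : m = (a:ℤ) - N := by omega
  have r1 : qbZ x (2*N+2) ((N:ℤ)+1+m) = Pp x (2*N+2) * gi x ((a:ℤ)+1) * gi x ((b:ℤ)+1) := by
    rw [qbZ_eq habs, show (N:ℤ)+1+m = (a:ℤ)+1 from by omega,
      show ((2*N+2 : ℕ):ℤ) - ((a:ℤ)+1) = (b:ℤ)+1 from by push_cast; omega]
  have r2 : qbZ x (2*N) ((N:ℤ)+m) = Pp x (2*N) * gi x (a:ℤ) * gi x (b:ℤ) := by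
    rw [qbZ_eq habs, show (N:ℤ)+m = (a:ℤ) from by omega,
      show ((2*N : ℕ):ℤ) - (a:ℤ) = (b:ℤ) from by push_cast; omega]
  have r3 : qbZ x (2*N) ((N:ℤ)+m-1) = Pp x (2*N) * gi x ((a:ℤ)-1) * gi x ((b:ℤ)+1) := by
    rw [qbZ_eq habs, show (N:ℤ)+m-1 = (a:ℤ)-1 from by omega,
      show ((2*N : ℕ):ℤ) - ((a:ℤ)-1) = (b:ℤ)+1 from by push_cast; omega]
  have r4 : qbZ x (2*N) ((N:ℤ)+m+1) = Pp x (2*N) * gi x ((a:ℤ)+1) * gi x ((b:ℤ)-1) := by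
    rw [qbZ_eq habs, show (N:ℤ)+m+1 = (a:ℤ)+1 from by omega,
      show ((2*N : ℕ):ℤ) - ((a:ℤ)+1) = (b:ℤ)-1 from by push_cast; omega]
  have g1 : gi x (a:ℤ) = gi x ((a:ℤ)+1) * (1 - x^(a+1)) := by
    have h := gi_rec habs (a:ℤ) (by omega)
    rwa [show ((a:ℤ)+1).toNat = a+1 from by omega] at h
  have g2 : gi x ((a:ℤ)-1) = gi x ((a:ℤ)+1) * (1 - x^(a+1)) * (1 - x^a) := by
    have h := gi_rec habs ((a:ℤ)-1) (by omega)
    rw [sub_add_cancel, show ((a:ℤ)).toNat = a from by omega] at h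
    rw [h, g1]
  have g3 : gi x (b:ℤ) = gi x ((b:ℤ)+1) * (1 - x^(b+1)) := by
    have h := gi_rec habs (b:ℤ) (by omega)
    rwa [show ((b:ℤ)+1).toNat = b+1 from by omega] at h
  have g4 : gi x ((b:ℤ)-1) = gi x ((b:ℤ)+1) * (1 - x^(b+1)) * (1 - x^b) := by
    have h := gi_rec habs ((b:ℤ)-1) (by omega)
    rw [sub_add_cancel, show ((b:ℤ)).toNat = b from by omega] at h
    rw [h, g3]
  have p1 : Pp x (2*N+2) = Pp x (2*N) * (1 - x^(2*N+1)) * (1 - x^(2*N+2)) := by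
    rw [show 2*N+2 = (2*N+1)+1 from by omega, Pp_succ, Pp_succ]
  have c1 := cf_mul_sub_one hq0 N a b m hm hab
  have c2 := cf_mul_add_one hq0 N a b m hm hab
  rw [r1, r2, r3, r4, g1, g2, g3, g4, p1]
  have w1 : x^(2*N+1) = x^a * x^b * x := by
    rw [show 2*N+1 = (a+b)+1 from by omega, pow_succ, pow_add]
  have w2 : x^(2*N+2) = x^a * x^b * (x*x) := by
    rw [show 2*N+2 = ((a+b)+1)+1 from by omega, pow_succ, pow_succ, pow_add]; ring
  rw [w1, w2]
  rw [← hxdef] at c1 c2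
  linear_combination (Pp x (2*N) * gi x ((a:ℤ)+1) * (1 - x^(a+1)) * (1 - x^a) * gi x ((b:ℤ)+1)) * c1
    + (Pp x (2*N) * gi x ((a:ℤ)+1) * gi x ((b:ℤ)+1) * (1 - x^(b+1)) * (1 - x^b)) * c2


lemma sum_shift (a b c : ℤ) (f : ℤ → ℂ) :
    ∑ m ∈ Finset.Icc a b, f (m + c) = ∑ m ∈ Finset.Icc (a+c) (b+c), f m := by
  rw [← Finset.map_add_right_Icc, Finset.sum_map]
  simp [addRightEmbedding]

lemma key {q : ℂ} (hq0 : q ≠ 0) (habs : Complex.abs (q^2) < 1) (N : ℕ) :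
    ∑ m ∈ Finset.Icc (-(N:ℤ)) (N:ℤ), cf q m * qbZ (q^2) (2*N) ((N:ℤ)+m)
      = ∏ j ∈ Finset.range N, (1 - q^(2*j+1))^2 := by
  induction N with
  | zero =>
    simp [cf, qbZ, qb_zero_right]
  | succ N ih =>
    have hcast : ∀ m : ℤ, (((N+1:ℕ)):ℤ) + m = (N:ℤ)+1+m := by intro m; push_cast; ring
    have h2 : 2*(N+1) = 2*N+2 := by omega
    have step : ∀ m ∈ Finset.Icc (-((N:ℤ)+1)) ((N:ℤ)+1),
        cf q m * qbZ (q^2) (2*(N+1)) ((((N+1:ℕ)):ℤ)+m) =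
        (1 + (q^2)^(2*N+1)) * (cf q m * qbZ (q^2) (2*N) ((N:ℤ)+m))
          - q^(2*N+1) * (cf q (m-1) * qbZ (q^2) (2*N) ((N:ℤ)+m-1)
                       + cf q (m+1) * qbZ (q^2) (2*N) ((N:ℤ)+m+1)) := by
      intro m _
      rw [hcast, h2]
      exact dagger hq0 habs N m
    have hIcc : Finset.Icc (-((N+1:ℕ):ℤ)) ((N+1:ℕ):ℤ) = Finset.Icc (-((N:ℤ)+1)) ((N:ℤ)+1) := by
      push_cast; rfl
    rw [hIcc, Finset.sum_congr rfl step]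
    rw [Finset.sum_sub_distrib, ← Finset.mul_sum, ← Finset.mul_sum, Finset.sum_add_distrib]
    set F : ℤ → ℂ := fun m' => cf q m' * qbZ (q^2) (2*N) ((N:ℤ)+m') with hF
    have S0 : ∑ m ∈ Finset.Icc (-((N:ℤ)+1)) ((N:ℤ)+1), cf q m * qbZ (q^2) (2*N) ((N:ℤ)+m)
        = ∑ m ∈ Finset.Icc (-(N:ℤ)) (N:ℤ), cf q m * qbZ (q^2) (2*N) ((N:ℤ)+m) := by
      refine (Finset.sum_subset (Finset.Icc_subset_Icc (by omega) (by omega)) ?_).symm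
      intro m hm hnot
      simp only [Finset.mem_Icc] at hm hnot
      have : m = (N:ℤ)+1 ∨ m = -((N:ℤ)+1) := by omega
      rcases this with rfl | rfl
      · rw [qbZ_eq_zero (q^2) (2*N) _ (by right; push_cast; omega)]; ring
      · rw [qbZ_eq_zero (q^2) (2*N) _ (by left; omega)]; ring
    have S1 : ∑ m ∈ Finset.Icc (-((N:ℤ)+1)) ((N:ℤ)+1),
        cf q (m-1) * qbZ (q^2) (2*N) ((N:ℤ)+m-1)
        = ∑ m ∈ Finset.Icc (-(N:ℤ)) (N:ℤ), cf q m * qbZ (q^2) (2*N) ((N:ℤ)+m) := by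
      calc ∑ m ∈ Finset.Icc (-((N:ℤ)+1)) ((N:ℤ)+1), cf q (m-1) * qbZ (q^2) (2*N) ((N:ℤ)+m-1)
          = ∑ m ∈ Finset.Icc (-((N:ℤ)+1)) ((N:ℤ)+1), F (m + (-1)) := by
            refine Finset.sum_congr rfl (fun m _ => ?_)
            rw [hF]
            simp only []
            rw [show m + (-1) = m - 1 from by ring, show (N:ℤ)+(m-1) = (N:ℤ)+m-1 from by ring]
        _ = ∑ m ∈ Finset.Icc (-((N:ℤ)+1)+(-1)) (((N:ℤ)+1)+(-1)), F m :=
            sum_shift _ _ _ F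
        _ = ∑ m ∈ Finset.Icc (-((N:ℤ)+2)) ((N:ℤ)), F m := by
            rw [show -((N:ℤ)+1)+(-1) = -((N:ℤ)+2) from by ring,
               show ((N:ℤ)+1)+(-1) = (N:ℤ) from by ring]
        _ = ∑ m ∈ Finset.Icc (-(N:ℤ)) (N:ℤ), F m := by
            refine (Finset.sum_subset (Finset.Icc_subset_Icc (by omega) (by omega)) ?_).symm
            intro m hm hnot
            simp only [Finset.mem_Icc] at hm hnot
            have : m = -((N:ℤ)+1) ∨ m = -((N:ℤ)+2) := by omega
            rcases this with rfl | rfl <;>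
              · rw [hF]; simp only []
                rw [qbZ_eq_zero (q^2) (2*N) _ (by left; omega)]; ring
    have S2 : ∑ m ∈ Finset.Icc (-((N:ℤ)+1)) ((N:ℤ)+1),
        cf q (m+1) * qbZ (q^2) (2*N) ((N:ℤ)+m+1)
        = ∑ m ∈ Finset.Icc (-(N:ℤ)) (N:ℤ), cf q m * qbZ (q^2) (2*N) ((N:ℤ)+m) := by
      calc ∑ m ∈ Finset.Icc (-((N:ℤ)+1)) ((N:ℤ)+1), cf q (m+1) * qbZ (q^2) (2*N) ((N:ℤ)+m+1)
          = ∑ m ∈ Finset.Icc (-((N:ℤ)+1)) ((N:ℤ)+1), F (m + 1) := by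
            refine Finset.sum_congr rfl (fun m _ => ?_)
            rw [hF]
            simp only []
            rw [show (N:ℤ)+(m+1) = (N:ℤ)+m+1 from by ring]
        _ = ∑ m ∈ Finset.Icc (-((N:ℤ)+1)+1) (((N:ℤ)+1)+1), F m :=
            sum_shift _ _ _ F
        _ = ∑ m ∈ Finset.Icc (-(N:ℤ)) ((N:ℤ)+2), F m := by
            rw [show -((N:ℤ)+1)+1 = -(N:ℤ) from by ring,
               show ((N:ℤ)+1)+1 = (N:ℤ)+2 from by ring]
        _ = ∑ m ∈ Finset.Icc (-(N:ℤ)) (N:ℤ), F m := by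
            refine (Finset.sum_subset (Finset.Icc_subset_Icc (by omega) (by omega)) ?_).symm
            intro m hm hnot
            simp only [Finset.mem_Icc] at hm hnot
            have : m = (N:ℤ)+1 ∨ m = (N:ℤ)+2 := by omega
            rcases this with rfl | rfl <;>
              · rw [hF]; simp only []
                rw [qbZ_eq_zero (q^2) (2*N) _ (by right; push_cast; omega)]; ring
    rw [S0, S1, S2, ih, Finset.prod_range_succ]
    ring


lemma one_sub_ne_of_abs_lt {z : ℂ} (h : Complex.abs z < 1) : (1:ℂ) - z ≠ 0 := by
  intro h0
  have : z = 1 := by linear_combination -h0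
  rw [this] at h; simp at h

lemma habs2 {q : ℂ} (hq : Complex.abs q < 1) : Complex.abs (q^2) < 1 := by
  rw [map_pow]
  exact pow_lt_one₀ (Complex.abs.nonneg q) hq two_ne_zero

section Limit
variable {q : ℂ} (hq0 : q ≠ 0) (hq : Complex.abs q < 1)
include hq0 hq

lemma main_identity :
    (∑' m : ℤ, cf q m) =
      (∏' j : ℕ, (1 - (q^2)^(j+1))) * (∏' j : ℕ, (1 - q^(2*j+1)))^2 := by
  have habs : Complex.abs (q^2) < 1 := habs2 hq
  set x := q^2 with hxdef
  -- infinite product for Pp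
  have hsumx : Summable (fun j : ℕ => x^(j+1)) := by
    have := (summable_geometric_of_norm_lt_one
      (show ‖x‖ < 1 by rwa [Complex.norm_eq_abs])).mul_left x
    exact this.congr (fun j => by rw [← pow_succ'])
  have hP : HasProd (fun j : ℕ => 1 - x^(j+1)) (∏' j : ℕ, (1 - x^(j+1))) :=
    hasProd_one_sub hsumx (fun j => one_sub_pow_ne habs j)
  set Pinf := ∏' j : ℕ, (1 - x^(j+1)) with hPinf
  have tendsto_Pp : Tendsto (fun n => Pp x n) atTop (𝓝 Pinf) := by
    have := hP.tendsto_prod_nat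
    simpa [Pp] using this
  have tendsto_abs_Pp : Tendsto (fun n => Complex.abs (Pp x n)) atTop (𝓝 (Complex.abs Pinf)) :=
    (Complex.continuous_abs.tendsto Pinf).comp tendsto_Pp
  have hPne : Pinf ≠ 0 := by
    have hL : Real.exp (-(Complex.abs x / (1 - Complex.abs x)^2)) ≤ Complex.abs Pinf :=
      ge_of_tendsto tendsto_abs_Pp (Filter.Eventually.of_forall (le_Pp_abs habs))
    intro h0
    rw [h0] at hL; simp at hL
    exact absurd hL (not_le.mpr (Real.exp_pos _))
  -- pointwise limits
  have tendsto_qbZ : ∀ m : ℤ,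
      Tendsto (fun N : ℕ => qbZ x (2*N) ((N:ℤ)+m)) atTop (𝓝 Pinf⁻¹) := by
    intro m
    have hnat1 : Tendsto (fun N : ℕ => ((N:ℤ)+m).toNat) atTop atTop :=
      Filter.tendsto_atTop_atTop.mpr (fun b => ⟨b + m.natAbs, fun a ha => by omega⟩)
    have hnat2 : Tendsto (fun N : ℕ => ((N:ℤ)-m).toNat) atTop atTop :=
      Filter.tendsto_atTop_atTop.mpr (fun b => ⟨b + m.natAbs, fun a ha => by omega⟩)
    have hnat3 : Tendsto (fun N : ℕ => 2*N) atTop atTop :=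
      Filter.tendsto_atTop_atTop.mpr (fun b => ⟨b, fun a ha => by omega⟩)
    have hlim : Tendsto (fun N : ℕ => Pp x (2*N) * (Pp x ((N:ℤ)+m).toNat)⁻¹ *
        (Pp x ((N:ℤ)-m).toNat)⁻¹) atTop (𝓝 (Pinf * Pinf⁻¹ * Pinf⁻¹)) :=
      ((tendsto_Pp.comp hnat3).mul ((tendsto_Pp.comp hnat1).inv₀ hPne)).mul
        ((tendsto_Pp.comp hnat2).inv₀ hPne)
    have hval : Pinf * Pinf⁻¹ * Pinf⁻¹ = Pinf⁻¹ := by field_simp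
    rw [hval] at hlim
    refine Tendsto.congr' ?_ hlim
    filter_upwards [Filter.eventually_ge_atTop m.natAbs] with N hN
    have h1 : qbZ x (2*N) ((N:ℤ)+m) =
        Pp x (2*N) * gi x ((N:ℤ)+m) * gi x (((2*N : ℕ):ℤ) - ((N:ℤ)+m)) := qbZ_eq habs _ _
    rw [h1, show ((2*N : ℕ):ℤ) - ((N:ℤ)+m) = (N:ℤ)-m from by push_cast; ring]
    rw [gi, gi, if_pos (by omega), if_pos (by omega)]
  -- dominated convergence
  set r := Complex.abs q with hr
  have hr0 : 0 < r := by
    rw [hr]; exact Complex.abs.pos hq0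
  have hbound : ∀ (N : ℕ) (m : ℤ),
      ‖cf q m * qbZ x (2*N) ((N:ℤ)+m)‖ ≤ Cbd x * r^(m.natAbs) := by
    intro N m
    rw [norm_mul]
    have hcf : ‖cf q m‖ ≤ r^(m.natAbs) := by
      rw [cf, norm_mul]
      have h1 : ‖((-1:ℂ))^m‖ = 1 := by
        rw [Complex.norm_eq_abs, map_zpow₀]
        simp
      rw [h1, one_mul, Complex.norm_eq_abs]
      have h2 : (m^2 : ℤ) = ((m.natAbs^2 : ℕ) : ℤ) := by
        push_cast
        rw [_root_.sq_abs]
      rw [h2, zpow_natCast, map_pow]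
      exact pow_le_pow_of_le_one (Complex.abs.nonneg q) hq.le
        (Nat.le_self_pow two_ne_zero m.natAbs)
    have hqb : ‖qbZ x (2*N) ((N:ℤ)+m)‖ ≤ Cbd x := by
      rw [qbZ]
      split
      · rw [Complex.norm_eq_abs]; exact qb_abs_le habs _ _
      · simp; exact Cbd_pos.le
    calc ‖cf q m‖ * ‖qbZ x (2*N) ((N:ℤ)+m)‖ ≤ r^(m.natAbs) * Cbd x :=
          mul_le_mul hcf hqb (norm_nonneg _) (pow_nonneg hr0.le _)
      _ = Cbd x * r^(m.natAbs) := by ring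
  have hsummable : Summable (fun m : ℤ => Cbd x * r^(m.natAbs)) := by
    refine Summable.mul_left _ ?_
    refine Summable.of_nat_of_neg ?_ ?_
    · exact (summable_geometric_of_lt_one hr0.le hq).congr
        (fun n => by simp)
    · exact (summable_geometric_of_lt_one hr0.le hq).congr
        (fun n => by simp)
  have hDC := tendsto_tsum_of_dominated_convergence (𝓕 := (atTop : Filter ℕ))
    (f := fun N m => cf q m * qbZ x (2*N) ((N:ℤ)+m))
    (g := fun m => cf q m * Pinf⁻¹) hsummable
    (fun m => (tendsto_qbZ m).const_mul (cf q m))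
    (Filter.Eventually.of_forall (fun N m => hbound N m))
  -- tsum equals finite sum
  have htsum_eq : ∀ N : ℕ, (∑' m : ℤ, cf q m * qbZ x (2*N) ((N:ℤ)+m)) =
      ∑ m ∈ Finset.Icc (-(N:ℤ)) (N:ℤ), cf q m * qbZ x (2*N) ((N:ℤ)+m) := by
    intro N
    refine tsum_eq_sum ?_
    intro m hm
    simp only [Finset.mem_Icc, not_and_or, not_le] at hm
    rcases hm with hm | hm
    · rw [qbZ_eq_zero x (2*N) _ (by left; omega)]; ring
    · rw [qbZ_eq_zero x (2*N) _ (by right; push_cast; omega)]; ring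
  have hDC2 : Tendsto (fun N : ℕ => ∑ m ∈ Finset.Icc (-(N:ℤ)) (N:ℤ),
      cf q m * qbZ x (2*N) ((N:ℤ)+m)) atTop (𝓝 (∑' m : ℤ, cf q m * Pinf⁻¹)) := by
    refine Tendsto.congr' ?_ hDC
    exact Filter.Eventually.of_forall htsum_eq
  -- RHS limit
  have hsumu : Summable (fun j : ℕ => q^(2*j+1)) := by
    have := (summable_geometric_of_norm_lt_one
      (show ‖x‖ < 1 by rwa [Complex.norm_eq_abs])).mul_left q
    refine this.congr (fun j => ?_)
    rw [pow_add, pow_mul, pow_one, hxdef]; ring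
  have hne2 : ∀ j : ℕ, 1 - q^(2*j+1) ≠ 0 := by
    intro j
    refine one_sub_ne_of_abs_lt ?_
    rw [map_pow]
    exact pow_lt_one₀ (Complex.abs.nonneg q) hq (by omega)
  have hG : HasProd (fun j : ℕ => 1 - q^(2*j+1)) (∏' j : ℕ, (1 - q^(2*j+1))) :=
    hasProd_one_sub hsumu hne2
  set G := ∏' j : ℕ, (1 - q^(2*j+1)) with hGdef
  have tendsto_G : Tendsto (fun N : ℕ => ∏ j ∈ Finset.range N, (1 - q^(2*j+1)))
      atTop (𝓝 G) := hG.tendsto_prod_nat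
  have tendsto_G2 : Tendsto (fun N : ℕ => ∏ j ∈ Finset.range N, (1 - q^(2*j+1))^2)
      atTop (𝓝 (G^2)) := by
    have := tendsto_G.pow 2
    refine Tendsto.congr (fun N => ?_) this
    rw [Finset.prod_pow]
  -- combine
  have hkeyfun : (fun N : ℕ => ∑ m ∈ Finset.Icc (-(N:ℤ)) (N:ℤ),
      cf q m * qbZ x (2*N) ((N:ℤ)+m)) =
      (fun N : ℕ => ∏ j ∈ Finset.range N, (1 - q^(2*j+1))^2) := by
    funext N
    exact key hq0 habs N
  rw [hkeyfun] at hDC2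
  have huniq : (∑' m : ℤ, cf q m * Pinf⁻¹) = G^2 := tendsto_nhds_unique hDC2 tendsto_G2
  rw [tsum_mul_right] at huniq
  field_simp at huniq
  rw [hPinf, hGdef] at huniq ⊢
  linear_combination huniq

end Limit
end Theta01JTP

open Theta01JTP Filter Topology Real

theorem theta01_product_formula (τ : ℂ) (hτ : 0 < τ.im) :
    (∑' n : ℤ, Complex.exp ((Real.pi : ℂ) * I * (n : ℂ) ^ 2 * τ + (Real.pi : ℂ) * I * (n : ℂ))) =
      (∏' m : ℕ, (1 - Complex.exp (2 * (Real.pi : ℂ) * I * ((m : ℂ) + 1) * τ))) *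
      (∏' m : ℕ, (1 - Complex.exp ((Real.pi : ℂ) * I * (2 * (m : ℂ) + 1) * τ))) ^ 2 := by
  set q : ℂ := Complex.exp ((Real.pi : ℂ) * I * τ) with hqdef
  have hq0 : q ≠ 0 := Complex.exp_ne_zero _
  have hq : Complex.abs q < 1 := by
    rw [hqdef, Complex.abs_exp]
    have hre : ((Real.pi : ℂ) * I * τ).re = -(Real.pi * τ.im) := by
      simp [Complex.mul_re, Complex.mul_im]
    rw [hre]
    rw [Real.exp_lt_one_iff]
    have := Real.pi_pos
    nlinarith
  have h := main_identity hq0 hq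
  have hL : (∑' n : ℤ, Complex.exp ((Real.pi : ℂ) * I * (n : ℂ) ^ 2 * τ +
      (Real.pi : ℂ) * I * (n : ℂ))) = ∑' m : ℤ, cf q m := by
    refine tsum_congr (fun n => ?_)
    rw [cf, mul_comm ((-1:ℂ)^n) _, Complex.exp_add]
    congr 1
    · rw [show (Real.pi : ℂ) * I * (n : ℂ) ^ 2 * τ = ((n^2 : ℤ) : ℂ) * ((Real.pi : ℂ) * I * τ)
        from by push_cast; ring, Complex.exp_int_mul, ← hqdef]
    · rw [show (Real.pi : ℂ) * I * (n : ℂ) = ((n : ℤ) : ℂ) * ((Real.pi : ℂ) * I)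
        from by push_cast; ring, Complex.exp_int_mul, Complex.exp_pi_mul_I]
  have hR1 : (∏' m : ℕ, (1 - Complex.exp (2 * (Real.pi : ℂ) * I * ((m : ℂ) + 1) * τ)))
      = ∏' j : ℕ, (1 - (q^2)^(j+1)) := by
    refine tprod_congr (fun m => ?_)
    congr 1
    rw [hqdef, ← pow_mul, ← Complex.exp_nat_mul]
    congr 1
    push_cast
    ring
  have hR2 : (∏' m : ℕ, (1 - Complex.exp ((Real.pi : ℂ) * I * (2 * (m : ℂ) + 1) * τ)))
      = ∏' j : ℕ, (1 - q^(2*j+1)) := by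
    refine tprod_congr (fun m => ?_)
    congr 1
    rw [hqdef, ← Complex.exp_nat_mul]
    congr 1
    push_cast
    ring
  rw [hL, hR1, hR2, h]
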